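/- Consider the problem: maximize Σ_{t=1}^T L_t x_t over x_t ∈ {0,1} and p_t ≥ 0 subject to Σ_{t=1}^T p_t ≤ TP and τB log₂(1 + h² p_t/σ²) ≥ x_t I + (1−x_t) S, where all channel gains are equal to h² > 0, I > S > 0, and the losses satisfy L_1 ≥ L_2 ≥ ⋯ ≥ L_T > 0. Let μ be the largest integer x with Ξ(x) ≤ TP, where Ξ(x) = x·(σ²2^{I/(τB)}−σ²)/h² + (T−x)·(σ²2^{S/(τB)}−σ²)/h². Then an optimal solution sets x_t = 1 for t ≤ μ and x_t = 0 for t > μ, with p_t equal to the minimum power meeting the rate constraint. -/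

import Mathlib

lemma card_filter_lt_fin (T μ : ℕ) (h : μ ≤ T) :
    (Finset.univ.filter (fun t : Fin T => (t:ℕ) < μ)).card = μ := by
  rcases lt_or_eq_of_le h with h' | rfl
  · have : (Finset.univ.filter (fun t : Fin T => (t:ℕ) < μ)) = Finset.Iio ⟨μ, h'⟩ := by
      ext t; simp [Fin.lt_def]
    rw [this, Fin.card_Iio]
  · have : (Finset.univ.filter (fun t : Fin μ => (t:ℕ) < μ)) = Finset.univ := by
      ext t; simp [t.isLt]
    rw [this]; simp

/-- Proposition 2: with equal channel gains and losses sorted in descending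
order, the ranking solution (upload images on the `μ` largest-loss frames,
poses elsewhere, with minimal powers) is optimal, i.e. it is feasible and
maximizes `∑ L_t x_t` among all feasible solutions. -/
theorem ranking_optimal_equal_channels (T : ℕ) (hT : 1 ≤ T)
    (τ B σ2 h2 I S P : ℝ) (L : Fin T → ℝ)
    (hτ : 0 < τ) (hB : 0 < B) (hσ : 0 < σ2) (hh : 0 < h2)
    (hS : 0 < S) (hIS : S < I)
    (hLpos : ∀ t, 0 < L t) (hLsorted : ∀ s t : Fin T, s ≤ t → L t ≤ L s)
    (Xi : ℕ → ℝ)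
    (hXi : ∀ x : ℕ, Xi x = x * ((σ2 * (2:ℝ) ^ (I / (τ * B)) - σ2) / h2) +
      ((T : ℝ) - x) * ((σ2 * (2:ℝ) ^ (S / (τ * B)) - σ2) / h2))
    (hfeas0 : Xi 0 ≤ T * P)
    (μ : ℕ) (hμT : μ ≤ T) (hμ1 : Xi μ ≤ T * P)
    (hμ2 : ∀ ν : ℕ, ν ≤ T → Xi ν ≤ T * P → ν ≤ μ)
    (feasible : (Fin T → ℝ) → (Fin T → ℝ) → Prop)
    (hfeas : ∀ x p, feasible x p ↔
      (∀ t, x t = 0 ∨ x t = 1) ∧ (∀ t, 0 ≤ p t) ∧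
      (∀ t, τ * B * Real.logb 2 (1 + h2 * p t / σ2) ≥ x t * I + (1 - x t) * S) ∧
      (∑ t, p t) ≤ T * P)
    (xstar pstar : Fin T → ℝ)
    (hxstar : ∀ t : Fin T, xstar t = if (t : ℕ) < μ then 1 else 0)
    (hpstar : ∀ t : Fin T, pstar t =
      σ2 / h2 * ((2:ℝ) ^ ((xstar t * I + (1 - xstar t) * S) / (τ * B)) - 1)) :
    feasible xstar pstar ∧
      ∀ x p, feasible x p → (∑ t, L t * x t) ≤ ∑ t, L t * xstar t := by
  have hτB : 0 < τ * B := mul_pos hτ hB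
  set a : ℝ := σ2 / h2 * ((2:ℝ) ^ (I / (τ * B)) - 1) with ha_def
  set b : ℝ := σ2 / h2 * ((2:ℝ) ^ (S / (τ * B)) - 1) with hb_def
  -- one ≤ 2^(c/(τB)) for positive c
  have hone : ∀ c : ℝ, 0 < c → (1:ℝ) ≤ (2:ℝ) ^ (c / (τ * B)) := by
    intro c hc
    calc (1:ℝ) = (2:ℝ) ^ (0:ℝ) := (Real.rpow_zero 2).symm
    _ ≤ (2:ℝ) ^ (c / (τ * B)) :=
      (Real.rpow_le_rpow_left_iff one_lt_two).mpr (by positivity)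
  have hb0 : 0 ≤ b := by
    have := hone S hS
    have : (0:ℝ) ≤ (2:ℝ) ^ (S / (τ * B)) - 1 := by linarith
    positivity
  have hab : b ≤ a := by
    have h1 : (2:ℝ) ^ (S / (τ * B)) ≤ (2:ℝ) ^ (I / (τ * B)) :=
      (Real.rpow_le_rpow_left_iff one_lt_two).mpr
        (by gcongr)
    have hσh : 0 ≤ σ2 / h2 := by positivity
    apply mul_le_mul_of_nonneg_left (by linarith) hσh
  -- Xi rewritten with a and b
  have hXi' : ∀ k : ℕ, Xi k = k * a + ((T:ℝ) - k) * b := by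
    intro k
    rw [hXi k, ha_def, hb_def]
    field_simp
  -- minimal power bound
  have hpow : ∀ (p c : ℝ), 0 ≤ p →
      τ * B * Real.logb 2 (1 + h2 * p / σ2) ≥ c →
      σ2 / h2 * ((2:ℝ) ^ (c / (τ * B)) - 1) ≤ p := by
    intro p c hp hrate
    have hy : (0:ℝ) < 1 + h2 * p / σ2 := by positivity
    have h1 : c / (τ * B) ≤ Real.logb 2 (1 + h2 * p / σ2) := by
      rw [div_le_iff₀ hτB]; linarith [hrate]
    have h2' : (2:ℝ) ^ (c / (τ * B)) ≤ 1 + h2 * p / σ2 := by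
      calc (2:ℝ) ^ (c / (τ * B)) ≤ (2:ℝ) ^ (Real.logb 2 (1 + h2 * p / σ2)) :=
        (Real.rpow_le_rpow_left_iff one_lt_two).mpr h1
      _ = 1 + h2 * p / σ2 := Real.rpow_logb (by norm_num) (by norm_num) hy
    have h3 : ((2:ℝ) ^ (c / (τ * B)) - 1) * σ2 ≤ h2 * p := by
      rw [← le_div_iff₀ hσ]; linarith
    rw [div_mul_eq_mul_div, div_le_iff₀ hh]
    linear_combination h3
  -- rate equality at the minimal power
  have hrate_eq : ∀ c : ℝ,
      τ * B * Real.logb 2 (1 + h2 * (σ2 / h2 * ((2:ℝ) ^ (c / (τ * B)) - 1)) / σ2) = c := by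
    intro c
    have harg : 1 + h2 * (σ2 / h2 * ((2:ℝ) ^ (c / (τ * B)) - 1)) / σ2
        = (2:ℝ) ^ (c / (τ * B)) := by
      field_simp
      ring
    rw [harg, Real.logb_rpow (by norm_num) (by norm_num)]
    field_simp
  -- the cost of each slot
  have hc_pos : ∀ t : Fin T, 0 < xstar t * I + (1 - xstar t) * S := by
    intro t; rw [hxstar t]
    split <;> norm_num <;> linarith
  have hps : ∀ t : Fin T, pstar t = if (t:ℕ) < μ then a else b := by
    intro t
    rw [hpstar t, hxstar t, ha_def, hb_def]
    split <;> norm_num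
  -- feasibility
  have hfeas_star : feasible xstar pstar := by
    rw [hfeas]
    refine ⟨?_, ?_, ?_, ?_⟩
    · intro t; rw [hxstar t]; split
      · right; rfl
      · left; rfl
    · intro t
      rw [hpstar t]
      have := hone _ (hc_pos t)
      have h1 : (0:ℝ) ≤ (2:ℝ) ^ ((xstar t * I + (1 - xstar t) * S) / (τ * B)) - 1 := by
        linarith
      positivity
    · intro t
      rw [hpstar t, hrate_eq (xstar t * I + (1 - xstar t) * S)]
    · have hsum : (∑ t, pstar t) = Xi μ := by
        have : (∑ t, pstar t) = ∑ t : Fin T, (if (t:ℕ) < μ then a else b) := by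
          exact Finset.sum_congr rfl fun t _ => hps t
        rw [this, Finset.sum_ite, Finset.sum_const, Finset.sum_const]
        have hcard1 : (Finset.univ.filter (fun t : Fin T => (t:ℕ) < μ)).card = μ :=
          card_filter_lt_fin T μ hμT
        have hcard2 : (Finset.univ.filter (fun t : Fin T => ¬ (t:ℕ) < μ)).card = T - μ := by
          have := Finset.card_filter_add_card_filter_not
            (s := (Finset.univ : Finset (Fin T))) (p := fun t : Fin T => (t:ℕ) < μ)
          simp only [Finset.card_univ, Fintype.card_fin] at this
          omega
        rw [hcard1, hcard2, hXi' μ, nsmul_eq_mul, nsmul_eq_mul]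
        rw [Nat.cast_sub hμT]
      rw [hsum]; exact hμ1
  refine ⟨hfeas_star, ?_⟩
  intro x p hfp
  rw [hfeas] at hfp
  obtain ⟨hx01, hp0, hrate, hsum⟩ := hfp
  set A : Finset (Fin T) := Finset.univ.filter (fun t => x t = 1) with hA_def
  set Bs : Finset (Fin T) := Finset.univ.filter (fun t : Fin T => (t:ℕ) < μ) with hB_def
  have hkT : A.card ≤ T := by
    calc A.card ≤ (Finset.univ : Finset (Fin T)).card := Finset.card_filter_le _ _
    _ = T := by simp
  have hBcard : Bs.card = μ := card_filter_lt_fin T μ hμT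
  -- number of uploads is at most μ
  have hkμ : A.card ≤ μ := by
    apply hμ2 A.card hkT
    have hXik : Xi A.card ≤ ∑ t, p t := by
      rw [hXi' A.card]
      have hsplit : (∑ t, p t) = (∑ t ∈ A, p t) + ∑ t ∈ Finset.univ.filter (fun t => ¬ x t = 1), p t := by
        rw [hA_def]
        exact (Finset.sum_filter_add_sum_filter_not _ _ _).symm
      have h1 : (A.card : ℝ) * a ≤ ∑ t ∈ A, p t := by
        rw [← nsmul_eq_mul]
        apply Finset.card_nsmul_le_sum
        intro t ht
        have hxt : x t = 1 := (Finset.mem_filter.mp ht).2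
        have := hpow (p t) I (hp0 t) (by have := hrate t; rw [hxt] at this; linarith)
        rw [ha_def]; exact this
      have hcard2 : (Finset.univ.filter (fun t : Fin T => ¬ x t = 1)).card = T - A.card := by
        have := Finset.card_filter_add_card_filter_not
          (s := (Finset.univ : Finset (Fin T))) (p := fun t : Fin T => x t = 1)
        simp only [Finset.card_univ, Fintype.card_fin] at this
        rw [hA_def]; omega
      have h2' : ((T:ℝ) - A.card) * b ≤ ∑ t ∈ Finset.univ.filter (fun t => ¬ x t = 1), p t := by
        have : ((T - A.card : ℕ) : ℝ) * b
            ≤ ∑ t ∈ Finset.univ.filter (fun t => ¬ x t = 1), p t := by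
          rw [← nsmul_eq_mul, ← hcard2]
          apply Finset.card_nsmul_le_sum
          intro t ht
          have hxt : x t = 0 := by
            rcases hx01 t with h | h
            · exact h
            · exact absurd h (Finset.mem_filter.mp ht).2
          have := hpow (p t) S (hp0 t) (by have := hrate t; rw [hxt] at this; linarith)
          rw [hb_def]; exact this
        rwa [Nat.cast_sub hkT] at this
      linarith
    linarith
  -- objective values as sums over sets
  have hobj : (∑ t, L t * x t) = ∑ t ∈ A, L t := by
    rw [hA_def, Finset.sum_filter]
    apply Finset.sum_congr rfl
    intro t _
    rcases hx01 t with h | h <;> simp [h]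
  have hobj_star : (∑ t, L t * xstar t) = ∑ t ∈ Bs, L t := by
    rw [hB_def, Finset.sum_filter]
    apply Finset.sum_congr rfl
    intro t _
    rw [hxstar t]
    split <;> simp
  rw [hobj, hobj_star]
  -- combinatorial comparison
  have hcardAB : (A \ Bs).card ≤ (Bs \ A).card := by
    have h1 : (A \ Bs).card + (A ∩ Bs).card = A.card := Finset.card_sdiff_add_card_inter A Bs
    have h2 : (Bs \ A).card + (Bs ∩ A).card = Bs.card := Finset.card_sdiff_add_card_inter Bs A
    have h3 : (A ∩ Bs).card = (Bs ∩ A).card := by rw [Finset.inter_comm]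
    omega
  have hkey : (∑ t ∈ A \ Bs, L t) ≤ ∑ t ∈ Bs \ A, L t := by
    rcases Finset.eq_empty_or_nonempty (A \ Bs) with he | hne
    · rw [he, Finset.sum_empty]
      exact Finset.sum_nonneg fun t _ => (hLpos t).le
    · have hBAne : (Bs \ A).Nonempty := by
        rw [← Finset.card_pos]
        have := Finset.card_pos.mpr hne
        omega
      set s0 := (Bs \ A).max' hBAne with hs0_def
      have hs0mem : s0 ∈ Bs \ A := Finset.max'_mem _ _
      have hs0B : (s0:ℕ) < μ := by
        have := (Finset.mem_sdiff.mp hs0mem).1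
        rw [hB_def] at this
        exact (Finset.mem_filter.mp this).2
      calc (∑ t ∈ A \ Bs, L t) ≤ (A \ Bs).card • L s0 := by
            apply Finset.sum_le_card_nsmul
            intro t ht
            have htnB : ¬ (t:ℕ) < μ := by
              have := (Finset.mem_sdiff.mp ht).2
              rw [hB_def] at this
              simpa using this
            exact hLsorted s0 t (by
              rw [Fin.le_def]; omega)
      _ ≤ (Bs \ A).card • L s0 := by
            apply nsmul_le_nsmul_left (hLpos s0).le hcardAB
      _ ≤ ∑ t ∈ Bs \ A, L t := by
            apply Finset.card_nsmul_le_sum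
            intro t ht
            exact hLsorted t s0 (Finset.le_max' _ t ht)
  have hA_split : (∑ t ∈ A ∩ Bs, L t) + (∑ t ∈ A \ Bs, L t) = ∑ t ∈ A, L t :=
    Finset.sum_inter_add_sum_sdiff A Bs L
  have hB_split : (∑ t ∈ Bs ∩ A, L t) + (∑ t ∈ Bs \ A, L t) = ∑ t ∈ Bs, L t :=
    Finset.sum_inter_add_sum_sdiff Bs A L
  have hIca : (∑ t ∈ A ∩ Bs, L t) = ∑ t ∈ Bs ∩ A, L t := by rw [Finset.inter_comm]
  linarith
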